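/- Let a, k₁, k₂, k₃ be real numbers with 0 < a ≤ min{k₁, k₂, k₃}. For every z ∈ ℝ³ with ‖z‖ = 1 and every real 3×3 matrix A, the rewritten Oseen–Frank density satisfies the identity W(z,A) = k₁(tr A)² + k₂⟨z, c(A)⟩² + k₃‖z × c(A)‖² + a(tr(A·A) − (tr A)²). Moreover, for every z ∈ ℝ³ (not necessarily of unit norm) and every real 3×3 matrix A one has the coercivity bound W(z,A) ≥ a‖A‖², where ‖A‖ denotes the Frobenius norm. -/

import Mathlib

open scoped RealInnerProductSpace

noncomputable section

/-- Euclidean three-space. -/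
abbrev E3 := EuclideanSpace ℝ (Fin 3)

/-- The space of real 3×3 matrices, equipped with the Frobenius norm
(identified with Euclidean space indexed by pairs of indices). -/
abbrev M33 := EuclideanSpace ℝ (Fin 3 × Fin 3)

/-- The cross product on ℝ³. -/
def crossV (u v : E3) : E3 :=
  (WithLp.equiv 2 (Fin 3 → ℝ)).symm ![u 1 * v 2 - u 2 * v 1, u 2 * v 0 - u 0 * v 2, u 0 * v 1 - u 1 * v 0]

/-- The axial (curl) vector c(A) = (A₃₂ − A₂₃, A₁₃ − A₃₁, A₂₁ − A₁₂) of a 3×3 matrix. -/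
def axial (A : M33) : E3 :=
  (WithLp.equiv 2 (Fin 3 → ℝ)).symm ![A (2, 1) - A (1, 2), A (0, 2) - A (2, 0), A (1, 0) - A (0, 1)]

/-- The trace of a 3×3 matrix. -/
def trace33 (A : M33) : ℝ := ∑ i : Fin 3, A (i, i)

/-- The trace of A·A for a 3×3 matrix A. -/
def trace33sq (A : M33) : ℝ := ∑ i : Fin 3, ∑ j : Fin 3, A (i, j) * A (j, i)

/-- The rewritten Oseen–Frank density
W(z,A) = a‖A‖² + (k₁−a)(tr A)² + (k₂−a)⟨z, c(A)⟩² + (k₃−a)‖z × c(A)‖². -/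
def W (a k1 k2 k3 : ℝ) (z : E3) (A : M33) : ℝ :=
  a * ‖A‖ ^ 2 + (k1 - a) * (trace33 A) ^ 2 + (k2 - a) * ⟪z, axial A⟫ ^ 2
    + (k3 - a) * ‖crossV z (axial A)‖ ^ 2

lemma e3_norm_sq (x : E3) : ‖x‖ ^ 2 = x 0 ^ 2 + x 1 ^ 2 + x 2 ^ 2 := by
  rw [EuclideanSpace.norm_eq, Real.sq_sqrt (by positivity)]
  simp [Fin.sum_univ_three, sq_abs]

lemma e3_inner (x y : E3) : ⟪x, y⟫ = x 0 * y 0 + x 1 * y 1 + x 2 * y 2 := by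
  simp [PiLp.inner_apply, Fin.sum_univ_three]
  ring

lemma m33_norm_sq (A : M33) : ‖A‖ ^ 2 =
    A (0,0)^2 + A (0,1)^2 + A (0,2)^2 + A (1,0)^2 + A (1,1)^2 + A (1,2)^2
      + A (2,0)^2 + A (2,1)^2 + A (2,2)^2 := by
  rw [EuclideanSpace.norm_eq, Real.sq_sqrt (by positivity)]
  rw [Fintype.sum_prod_type]
  simp [Fin.sum_univ_three, sq_abs]
  ring

/-- for unit vectors z the rewritten Oseen–Frank density satisfies
W(z,A) = k₁(tr A)² + k₂⟨z, c(A)⟩² + k₃‖z × c(A)‖² + a(tr(A·A) − (tr A)²), and for all z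
the coercivity bound W(z,A) ≥ a‖A‖² holds. -/
theorem oseen_frank_identity_and_coercivity (a k1 k2 k3 : ℝ)
    (ha : 0 < a) (hmin : a ≤ min k1 (min k2 k3)) :
    (∀ z : E3, ‖z‖ = 1 → ∀ A : M33,
      W a k1 k2 k3 z A =
        k1 * (trace33 A) ^ 2 + k2 * ⟪z, axial A⟫ ^ 2 + k3 * ‖crossV z (axial A)‖ ^ 2
          + a * (trace33sq A - (trace33 A) ^ 2)) ∧
    (∀ (z : E3) (A : M33), a * ‖A‖ ^ 2 ≤ W a k1 k2 k3 z A) := by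
  constructor
  · intro z hz A
    have hz2 : z 0 ^ 2 + z 1 ^ 2 + z 2 ^ 2 = 1 := by
      have := e3_norm_sq z
      rw [hz] at this
      linarith
    simp only [W, trace33, trace33sq, e3_inner, e3_norm_sq, m33_norm_sq, crossV, axial,
      WithLp.equiv_symm_apply, PiLp.toLp_apply, Matrix.cons_val_zero, Matrix.cons_val_one, Matrix.head_cons,
      Matrix.cons_val_two, Matrix.tail_cons, Fin.sum_univ_three]
    linear_combination (-(a * ((A (2,1) - A (1,2))^2 + (A (0,2) - A (2,0))^2
      + (A (1,0) - A (0,1))^2))) * hz2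
  · intro z A
    have h1 : a ≤ k1 := le_trans hmin (min_le_left _ _)
    have h2 : a ≤ k2 := le_trans hmin (le_trans (min_le_right _ _) (min_le_left _ _))
    have h3 : a ≤ k3 := le_trans hmin (le_trans (min_le_right _ _) (min_le_right _ _))
    have t1 := mul_nonneg (sub_nonneg.2 h1) (sq_nonneg (trace33 A))
    have t2 := mul_nonneg (sub_nonneg.2 h2) (sq_nonneg (⟪z, axial A⟫ : ℝ))
    have t3 := mul_nonneg (sub_nonneg.2 h3) (sq_nonneg ‖crossV z (axial A)‖)
    unfold W
    linarith

end
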